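/- Let Q ∈ R^{n×n} be symmetric positive definite, z ∈ R^n, and x* ≥ 0 satisfy the KKT conditions x*_i (Q x* + z)_i = 0 and (Q x* + z)_i ≥ 0 for all i. Then ||x*||_∞ ≤ sqrt(z^T Q^{-1} z / λ_min(Q)). -/

import Mathlib

open Matrix

/-- Rayleigh-type bound: the smallest eigenvalue times `‖v‖²` is at most `vᵀ Q v`. -/
lemma rayleigh_lower {n : ℕ} [NeZero n] (Q : Matrix (Fin n) (Fin n) ℝ) (hQ : Q.PosDef)
    (v : Fin n → ℝ) :
    (⨅ j, hQ.1.eigenvalues j) * (v ⬝ᵥ v) ≤ v ⬝ᵥ Q.mulVec v := by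
  set c : ℝ := ⨅ j, hQ.1.eigenvalues j with hc
  set U : Matrix (Fin n) (Fin n) ℝ := (hQ.1.eigenvectorUnitary : Matrix (Fin n) (Fin n) ℝ)
    with hU
  have hUmem : U ∈ unitary (Matrix (Fin n) (Fin n) ℝ) := hQ.1.eigenvectorUnitary.2
  have hUU : U * star U = 1 := (Unitary.mem_iff.mp hUmem).2
  have hdnonneg : ∀ j, 0 ≤ hQ.1.eigenvalues j - c := fun j => by
    have : c ≤ hQ.1.eigenvalues j := ciInf_le (Finite.bddBelow_range _) j
    linarith
  have hB : (U * diagonal (fun j => hQ.1.eigenvalues j - c) * Uᴴ).PosSemidef :=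
    (Matrix.PosSemidef.diagonal hdnonneg).mul_mul_conjTranspose_same U
  have hspec : Q = U * diagonal (fun j => hQ.1.eigenvalues j) * Uᴴ := by
    have := hQ.1.spectral_theorem
    exact this
  have hQeq : U * diagonal (fun j => hQ.1.eigenvalues j - c) * Uᴴ = Q - c • 1 := by
    have hdiag : diagonal (fun j => hQ.1.eigenvalues j - c)
        = diagonal (fun j => hQ.1.eigenvalues j) - c • 1 := by
      ext j k
      by_cases h : j = k <;>
        simp [h, Matrix.diagonal_apply, Matrix.sub_apply, Matrix.smul_apply, Matrix.one_apply]
    rw [hdiag, Matrix.mul_sub, Matrix.sub_mul, ← hspec]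
    congr 1
    rw [Matrix.mul_smul, Matrix.smul_mul, mul_one]
    rw [show Uᴴ = star U from rfl, hUU]
  have h0 := hB.dotProduct_mulVec_nonneg v
  rw [hQeq] at h0
  have : (0:ℝ) ≤ v ⬝ᵥ (Q - c • 1).mulVec v := by simpa using h0
  rw [Matrix.sub_mulVec, dotProduct_sub, Matrix.smul_mulVec, Matrix.one_mulVec,
    dotProduct_smul, smul_eq_mul] at this
  linarith

/-- KKT points of `min_{x ≥ 0} (1/2)xᵀQx + zᵀx` with `Q` symmetric positive definite satisfy
`‖x*‖_∞ ≤ √(zᵀ Q⁻¹ z / λ_min(Q))`. -/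
theorem stmt9 {n : ℕ} [NeZero n] (Q : Matrix (Fin n) (Fin n) ℝ) (hQ : Q.PosDef)
    (z xstar : Fin n → ℝ) (hx : ∀ i, 0 ≤ xstar i)
    (hkkt1 : ∀ i, xstar i * (Q.mulVec xstar + z) i = 0)
    (hkkt2 : ∀ i, 0 ≤ (Q.mulVec xstar + z) i) :
    ∀ i, |xstar i| ≤ Real.sqrt ((z ⬝ᵥ Q⁻¹.mulVec z) / (⨅ j, hQ.1.eigenvalues j)) := by
  intro i
  set c : ℝ := ⨅ j, hQ.1.eigenvalues j with hc
  have hcpos : 0 < c := by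
    obtain ⟨j, hj⟩ := exists_eq_ciInf_of_finite (f := fun j => hQ.1.eigenvalues j)
    rw [hc, ← hj]
    exact hQ.eigenvalues_pos j
  -- complementarity: xᵀQx + zᵀx = 0
  have hcomp : xstar ⬝ᵥ Q.mulVec xstar + xstar ⬝ᵥ z = 0 := by
    have : xstar ⬝ᵥ (Q.mulVec xstar + z) = 0 := by
      simp only [dotProduct]
      exact Finset.sum_eq_zero fun j _ => hkkt1 j
    rwa [dotProduct_add] at this
  -- invertibility
  have hdet : IsUnit Q.det := hQ.det_pos.ne'.isUnit
  have hQQinv : Q * Q⁻¹ = 1 := Matrix.mul_nonsing_inv Q hdet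
  have hQinvT : Q⁻¹ᵀ = Q⁻¹ := by
    rw [Matrix.transpose_nonsing_inv]
    congr 1
    simpa using hQ.1.eq
  -- quadratic lower bound: xᵀQx ≤ zᵀQ⁻¹z
  set y : Fin n → ℝ := xstar + Q⁻¹.mulVec z with hy
  have hxy : (0:ℝ) ≤ y ⬝ᵥ Q.mulVec y := by simpa using hQ.posSemidef.dotProduct_mulVec_nonneg y
  have hexp : y ⬝ᵥ Q.mulVec y
      = xstar ⬝ᵥ Q.mulVec xstar + 2 * (xstar ⬝ᵥ z) + z ⬝ᵥ Q⁻¹.mulVec z := by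
    have hT2 : xstar ⬝ᵥ Q.mulVec (Q⁻¹.mulVec z) = xstar ⬝ᵥ z := by
      rw [Matrix.mulVec_mulVec, hQQinv, Matrix.one_mulVec]
    have hT3 : (Q⁻¹.mulVec z) ⬝ᵥ Q.mulVec xstar = xstar ⬝ᵥ z := by
      rw [dotProduct_comm, dotProduct_mulVec, ← Matrix.mulVec_transpose, hQinvT,
        Matrix.mulVec_mulVec, Matrix.nonsing_inv_mul Q hdet, Matrix.one_mulVec,
        dotProduct_comm]
    have hT4 : (Q⁻¹.mulVec z) ⬝ᵥ Q.mulVec (Q⁻¹.mulVec z) = z ⬝ᵥ Q⁻¹.mulVec z := by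
      rw [Matrix.mulVec_mulVec, hQQinv, Matrix.one_mulVec, dotProduct_comm]
    simp only [hy, Matrix.mulVec_add, dotProduct_add, add_dotProduct]
    rw [hT2, hT3, hT4]
    ring
  have hkey : xstar ⬝ᵥ Q.mulVec xstar ≤ z ⬝ᵥ Q⁻¹.mulVec z := by
    have hq : xstar ⬝ᵥ Q.mulVec xstar = -(xstar ⬝ᵥ z) := by linarith
    rw [hexp, hq] at hxy
    linarith
  -- Rayleigh bound
  have hray := rayleigh_lower Q hQ xstar
  have hsum : xstar i ^ 2 ≤ xstar ⬝ᵥ xstar := by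
    have h1 : xstar i * xstar i ≤ ∑ j, xstar j * xstar j :=
      Finset.single_le_sum (fun j _ => mul_self_nonneg (xstar j)) (Finset.mem_univ i)
    simpa [dotProduct, pow_two] using h1
  have hx2 : xstar i ^ 2 ≤ (z ⬝ᵥ Q⁻¹.mulVec z) / c := by
    rw [le_div_iff₀ hcpos]
    calc xstar i ^ 2 * c = c * (xstar i ^ 2) := by ring
    _ ≤ c * (xstar ⬝ᵥ xstar) := by nlinarith
    _ ≤ xstar ⬝ᵥ Q.mulVec xstar := hray
    _ ≤ z ⬝ᵥ Q⁻¹.mulVec z := hkey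
  calc |xstar i| = Real.sqrt (xstar i ^ 2) := (Real.sqrt_sq_eq_abs _).symm
  _ ≤ Real.sqrt ((z ⬝ᵥ Q⁻¹.mulVec z) / c) := Real.sqrt_le_sqrt hx2
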